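/- Let $f$ be a Pettis integrable basic function with values in $\ell_2$ and let $\tau \in \{0,1\}^{<\infty}$. Then $\|\int_{I_\tau} f\| \ge \|\int_{I_\tau} f_{|\tau}\| = \sqrt{\sum_{(\sigma,i) \in \mathbf{B}, \sigma \in [\tau]} c(\sigma,i)^2}$, where $[\tau]$ denotes the set of finite binary sequences extending $\tau$. -/

import Mathlib

open MeasureTheory
open scoped Classical RealInnerProductSpace ENNReal NNReal

noncomputable section

/-- The Hilbert space `ℓ₂` of square-summable real sequences. -/
abbrev H2 : Type := lp (fun _ : ℕ => ℝ) 2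

/-- The index set `B = {(σ,i) : σ ∈ {0,1}^{<∞}, 0 ≤ i ≤ |σ|}`. -/
def Bidx : Type := Σ σ : List Bool, Fin (σ.length + 1)

/-- Left endpoint of the dyadic interval `I_σ`. -/
noncomputable def dyadicLeft (σ : List Bool) : ℝ :=
  ∑ i ∈ Finset.range σ.length, if σ.getD i false then (2:ℝ)⁻¹ ^ (i+1) else 0

/-- The dyadic interval `I_σ ⊆ [0,1]` of length `2^{-|σ|}`: `I_∅ = [0,1]`,
`I_{σ0}` is the left half and `I_{σ1}` the right half of `I_σ`. -/
noncomputable def dyadicInterval (σ : List Bool) : Set ℝ :=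
  Set.Icc (dyadicLeft σ) (dyadicLeft σ + (2:ℝ)⁻¹ ^ σ.length)

/-- `f` is Pettis integrable with respect to `μ`: every continuous functional composed with
`f` is integrable, and over each measurable set there is a vector representing the integrals. -/
def PettisIntegrable {X : Type} [NormedAddCommGroup X] [NormedSpace ℝ X]
    (f : ℝ → X) (μ : MeasureTheory.Measure ℝ) : Prop :=
  (∀ φ : X →L[ℝ] ℝ, MeasureTheory.Integrable (fun t => φ (f t)) μ) ∧
  ∀ E : Set ℝ, MeasurableSet E → ∃ v : X, ∀ φ : X →L[ℝ] ℝ, φ v = ∫ t in E, φ (f t) ∂μ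

/-- `v` is the Pettis integral of `f` over the set `E` (w.r.t. `μ`). -/
def IsPettisIntegralOn {X : Type} [NormedAddCommGroup X] [NormedSpace ℝ X]
    (f : ℝ → X) (μ : MeasureTheory.Measure ℝ) (E : Set ℝ) (v : X) : Prop :=
  ∀ φ : X →L[ℝ] ℝ, φ v = ∫ t in E, φ (f t) ∂μ

/-- The basic function `f = ∑_{(σ,i) ∈ B} c(σ,i) (1/λ(A(σ,i))) e(σ,i) χ_{A(σ,i)}`. -/
noncomputable def basicFun {X : Type} [NormedAddCommGroup X] [NormedSpace ℝ X]
    (c : Bidx → ℝ) (A : Bidx → Set ℝ) (e : Bidx → X) : ℝ → X :=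
  fun t => ∑' p : Bidx,
    Set.indicator (A p) (fun _ => ((MeasureTheory.volume (A p)).toReal)⁻¹ • (c p • e p)) t

/-- The restriction `f_{|τ}`: the subseries of the basic function over indices `(σ,i)`
with `σ` an extension of `τ`. -/
noncomputable def basicFunRes {X : Type} [NormedAddCommGroup X] [NormedSpace ℝ X]
    (τ : List Bool) (c : Bidx → ℝ) (A : Bidx → Set ℝ) (e : Bidx → X) : ℝ → X :=
  basicFun (fun p => if τ <+: p.1 then c p else 0) A e

lemma geomsum (n : ℕ) : ∑ i ∈ Finset.range n, (2:ℝ)⁻¹ ^ (i+1) = 1 - (2:ℝ)⁻¹ ^ n := by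
  induction n with
  | zero => simp
  | succ n ih => rw [Finset.sum_range_succ, ih, pow_succ]; ring

lemma dyadicLeft_nonneg (σ : List Bool) : 0 ≤ dyadicLeft σ := by
  apply Finset.sum_nonneg; intro i _; split <;> positivity

lemma dyadic_subset_unit (σ : List Bool) : dyadicInterval σ ⊆ Set.Icc 0 1 := by
  apply Set.Icc_subset_Icc (dyadicLeft_nonneg σ)
  have h : dyadicLeft σ ≤ ∑ i ∈ Finset.range σ.length, (2:ℝ)⁻¹ ^ (i+1) := by
    apply Finset.sum_le_sum; intro i _; split
    · exact le_rfl
    · positivity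
  rw [geomsum] at h
  linarith

lemma dyadicLeft_append (σ : List Bool) (b : Bool) :
    dyadicLeft (σ ++ [b]) = dyadicLeft σ + (if b then (2:ℝ)⁻¹ ^ (σ.length + 1) else 0) := by
  unfold dyadicLeft
  rw [List.length_append, List.length_singleton, Finset.sum_range_succ]
  congr 1
  · apply Finset.sum_congr rfl
    intro i hi
    rw [Finset.mem_range] at hi
    rw [List.getD_append _ _ _ _ hi]
  · congr 1
    rw [List.getD_eq_getElem?_getD, List.getElem?_append_right le_rfl]
    simp

lemma dyadicInterval_append_subset (σ : List Bool) (b : Bool) :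
    dyadicInterval (σ ++ [b]) ⊆ dyadicInterval σ := by
  unfold dyadicInterval
  rw [dyadicLeft_append, List.length_append, List.length_singleton]
  have hp : (2:ℝ)⁻¹ ^ (σ.length + 1) = (2:ℝ)⁻¹ ^ σ.length * 2⁻¹ := pow_succ _ _
  have hpos : (0:ℝ) < (2:ℝ)⁻¹ ^ σ.length := by positivity
  apply Set.Icc_subset_Icc
  · split <;> [linarith; linarith]
  · split <;> [linarith; linarith]

lemma dyadicInterval_prefix_subset {τ σ : List Bool} (h : τ <+: σ) :
    dyadicInterval σ ⊆ dyadicInterval τ := by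
  obtain ⟨ρ, rfl⟩ := h
  induction ρ using List.reverseRecOn with
  | nil => simp
  | append_singleton ρ b ih =>
    rw [← List.append_assoc]
    exact (dyadicInterval_append_subset _ _).trans ih


lemma phi_basicFun {A : Bidx → Set ℝ}
    (hdisj : ∀ p q : Bidx, p ≠ q → Disjoint (A p) (A q))
    (d : Bidx → ℝ) (e : Bidx → H2) (φ : H2 →L[ℝ] ℝ) (t : ℝ) :
    φ (basicFun d A e t) =
      ∑' p : Bidx, Set.indicator (A p)
        (fun _ => ((volume (A p)).toReal)⁻¹ * (d p * φ (e p))) t := by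
  by_cases h : ∃ p, t ∈ A p
  · obtain ⟨p₀, hp₀⟩ := h
    have hz : ∀ q, q ≠ p₀ → t ∉ A q := by
      intro q hq hqt
      exact Set.disjoint_left.mp (hdisj q p₀ hq) hqt hp₀
    have h1 : basicFun d A e t
        = ((volume (A p₀)).toReal)⁻¹ • (d p₀ • e p₀) := by
      unfold basicFun
      rw [tsum_eq_single p₀ (fun q hq => Set.indicator_of_notMem (hz q hq) _)]
      exact Set.indicator_of_mem hp₀ _
    rw [h1, tsum_eq_single p₀
      (fun q hq => Set.indicator_of_notMem (hz q hq) _),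
      Set.indicator_of_mem hp₀]
    simp [_root_.map_smul, smul_eq_mul]
  · push_neg at h
    have h1 : basicFun d A e t = 0 := by
      unfold basicFun
      rw [tsum_congr (fun p => Set.indicator_of_notMem (h p) _)]
      exact tsum_zero
    rw [h1, map_zero,
      tsum_congr (fun p => Set.indicator_of_notMem (h p)
        (fun _ => ((volume (A p)).toReal)⁻¹ * (d p * φ (e p))))]
    exact tsum_zero.symm

lemma inner_basicFun {A : Bidx → Set ℝ}
    (hdisj : ∀ p q : Bidx, p ≠ q → Disjoint (A p) (A q))
    (d : Bidx → ℝ) {e : Bidx → H2} (he : Orthonormal ℝ e) (q : Bidx) (t : ℝ) :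
    ⟪e q, basicFun d A e t⟫ =
      Set.indicator (A q) (fun _ => ((volume (A q)).toReal)⁻¹ * d q) t := by
  have h0 : ⟪e q, basicFun d A e t⟫ = (innerSL ℝ (e q)) (basicFun d A e t) := rfl
  rw [h0, phi_basicFun hdisj d e (innerSL ℝ (e q)) t]
  rw [tsum_eq_single q]
  · by_cases ht : t ∈ A q
    · rw [Set.indicator_of_mem ht, Set.indicator_of_mem ht]
      have : (innerSL ℝ (e q)) (e q) = 1 := by
        have := he.1 q
        simp only [innerSL_apply_apply]
        rw [real_inner_self_eq_norm_sq, this, one_pow]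
      rw [this, mul_one]
    · rw [Set.indicator_of_notMem ht, Set.indicator_of_notMem ht]
  · intro p hp
    have : (innerSL ℝ (e q)) (e p) = 0 := he.2 (Ne.symm hp)
    rw [this]
    simp

instance : Countable Bidx :=
  inferInstanceAs (Countable (Σ σ : List Bool, Fin (σ.length + 1)))

lemma setint {B S : Set ℝ} (hB : MeasurableSet B) (hS : MeasurableSet S)
    (hsub : S ⊆ Set.Icc (0:ℝ) 1) (a : ℝ) :
    ∫ t in S, Set.indicator B (fun _ => a) t ∂(volume.restrict (Set.Icc 0 1))
      = (volume (B ∩ S)).toReal * a := by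
  rw [Measure.restrict_restrict hS, Set.inter_eq_left.mpr hsub,
    integral_indicator_const a hB, measureReal_def, Measure.restrict_apply hB, smul_eq_mul]


/-- Lemma 3.1(3): for a Pettis integrable basic function `f` with values in `ℓ₂` and
`τ ∈ {0,1}^{<∞}`, `‖∫_{I_τ} f‖ ≥ ‖∫_{I_τ} f_{|τ}‖ = √(∑_{σ ∈ [τ]} c(σ,i)²)`. -/
theorem stmt7 (A : Bidx → Set ℝ) (hAc : ∀ p, IsClosed (A p))
    (hAs : ∀ p : Bidx, A p ⊆ dyadicInterval p.1)
    (hApos : ∀ p, 0 < volume (A p))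
    (hdisj : ∀ p q : Bidx, p ≠ q → Disjoint (A p) (A q))
    (e : Bidx → H2) (he : Orthonormal ℝ e) (c : Bidx → ℝ)
    (hP : PettisIntegrable (basicFun c A e) (volume.restrict (Set.Icc 0 1)))
    (τ : List Bool) (v vres : H2)
    (hv : IsPettisIntegralOn (basicFun c A e) (volume.restrict (Set.Icc 0 1))
      (dyadicInterval τ) v)
    (hvres : IsPettisIntegralOn (basicFunRes τ c A e) (volume.restrict (Set.Icc 0 1))
      (dyadicInterval τ) vres) :
    ‖vres‖ ≤ ‖v‖ ∧
    ‖vres‖ = Real.sqrt (∑' p : Bidx, if τ <+: p.1 then c p ^ 2 else 0) := by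
    classical
  set c' : Bidx → ℝ := fun p => if τ <+: p.1 then c p else 0 with hc'
  have hv' : ∀ φ : H2 →L[ℝ] ℝ, φ v = ∫ t in dyadicInterval τ,
      φ (basicFun c A e t) ∂(volume.restrict (Set.Icc 0 1)) := hv
  have hvres' : ∀ φ : H2 →L[ℝ] ℝ, φ vres = ∫ t in dyadicInterval τ,
      φ (basicFun c' A e t) ∂(volume.restrict (Set.Icc 0 1)) := hvres
  have hIτm : MeasurableSet (dyadicInterval τ) := measurableSet_Icc
  have hIτsub := dyadic_subset_unit τ
  have hAm : ∀ p, MeasurableSet (A p) := fun p => (hAc p).measurableSet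
  have hAfin : ∀ p, volume (A p) ≠ ⊤ := by
    intro p
    have h1 : volume (A p) ≤ volume (Set.Icc (0:ℝ) 1) :=
      measure_mono ((hAs p).trans (dyadic_subset_unit _))
    have h2 : volume (Set.Icc (0:ℝ) 1) < ⊤ := by
      rw [Real.volume_Icc]; exact ENNReal.ofReal_lt_top
    exact (h1.trans_lt h2).ne
  have hAtR : ∀ p, 0 < (volume (A p)).toReal :=
    fun p => ENNReal.toReal_pos (hApos p).ne' (hAfin p)
  have integ : ∀ (d : Bidx → ℝ) (q : Bidx),
      (∫ t in dyadicInterval τ, ⟪e q, basicFun d A e t⟫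
          ∂(volume.restrict (Set.Icc 0 1)))
        = ((volume (A q)).toReal)⁻¹ * d q * (volume (A q ∩ dyadicInterval τ)).toReal := by
    intro d q
    simp only [inner_basicFun hdisj d he q]
    rw [setint (hAm q) hIτm hIτsub]
    ring
  have hAsubI : ∀ q : Bidx, τ <+: q.1 → A q ∩ dyadicInterval τ = A q := by
    intro q hq
    exact Set.inter_eq_left.mpr ((hAs q).trans (dyadicInterval_prefix_subset hq))
  have hcoef_res : ∀ q, ⟪e q, vres⟫ = c' q := by
    intro q
    have h := hvres' (innerSL ℝ (e q))
    simp only [innerSL_apply_apply] at h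
    rw [h, integ c' q]
    by_cases hq : τ <+: q.1
    · rw [hAsubI q hq]
      have : c' q = c q := if_pos hq
      rw [this, mul_comm, ← mul_assoc, mul_inv_cancel₀ (hAtR q).ne', one_mul]
    · have : c' q = 0 := if_neg hq
      rw [this]; ring
  have hcoef_v : ∀ q, τ <+: q.1 → ⟪e q, v⟫ = c q := by
    intro q hq
    have h := hv' (innerSL ℝ (e q))
    simp only [innerSL_apply_apply] at h
    rw [h, integ c q, hAsubI q hq]
    rw [mul_comm, ← mul_assoc, mul_inv_cancel₀ (hAtR q).ne', one_mul]
  have hsum : Summable (fun p => c' p ^ 2) := by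
    have h := he.inner_products_summable (x := vres)
    apply h.congr
    intro p
    rw [hcoef_res p, Real.norm_eq_abs, sq_abs]
  -- the norm identity for vres
  have hD : ‖vres‖ ^ 2 = ∑' p, c' p ^ 2 := by
    have h := hvres' (innerSL ℝ vres)
    simp only [innerSL_apply_apply] at h
    rw [real_inner_self_eq_norm_sq] at h
    rw [h]
    have hpt : ∀ t : ℝ, (⟪vres, basicFun c' A e t⟫ : ℝ) =
        ∑' p : Bidx, Set.indicator (A p)
          (fun _ => ((volume (A p)).toReal)⁻¹ * (c' p * c' p)) t := by
      intro t
      rw [show (⟪vres, basicFun c' A e t⟫ : ℝ) = (innerSL ℝ vres) (basicFun c' A e t) from rfl,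
        phi_basicFun hdisj c' e (innerSL ℝ vres) t]
      apply tsum_congr
      intro p
      congr 1
      funext x
      rw [innerSL_apply_apply, real_inner_comm, hcoef_res p]
    have hk : ∀ p : Bidx, (0:ℝ) ≤ ((volume (A p)).toReal)⁻¹ * (c' p * c' p) := by
      intro p
      have := mul_self_nonneg (c' p)
      positivity
    have hmeas : ∀ p : Bidx, AEStronglyMeasurable
        (fun t : ℝ => Set.indicator (A p)
          (fun _ => ((volume (A p)).toReal)⁻¹ * (c' p * c' p)) t)
        ((volume.restrict (Set.Icc 0 1)).restrict (dyadicInterval τ)) :=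
      fun p => (measurable_const.indicator (hAm p)).aestronglyMeasurable
    have hlint : ∀ p : Bidx,
        (∫⁻ t, ‖Set.indicator (A p)
            (fun _ => ((volume (A p)).toReal)⁻¹ * (c' p * c' p)) t‖₊
          ∂((volume.restrict (Set.Icc 0 1)).restrict (dyadicInterval τ)))
        ≤ ENNReal.ofReal (c' p ^ 2) := by
      intro p
      have heq : ∀ t : ℝ, (‖Set.indicator (A p)
            (fun _ => ((volume (A p)).toReal)⁻¹ * (c' p * c' p)) t‖₊ : ℝ≥0∞)
          = Set.indicator (A p)
            (fun _ => ENNReal.ofReal (((volume (A p)).toReal)⁻¹ * (c' p * c' p))) t := by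
        intro t
        by_cases ht : t ∈ A p
        · rw [Set.indicator_of_mem ht, Set.indicator_of_mem ht,
            ← enorm_eq_nnnorm, Real.enorm_eq_ofReal (hk p)]
        · simp [Set.indicator_of_notMem ht]
      calc (∫⁻ t, ‖Set.indicator (A p)
            (fun _ => ((volume (A p)).toReal)⁻¹ * (c' p * c' p)) t‖₊
          ∂((volume.restrict (Set.Icc 0 1)).restrict (dyadicInterval τ)))
          = ENNReal.ofReal (((volume (A p)).toReal)⁻¹ * (c' p * c' p)) *
            ((volume.restrict (Set.Icc 0 1)).restrict (dyadicInterval τ)) (A p) := by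
            simp only [heq]
            rw [lintegral_indicator_const (hAm p)]
        _ ≤ ENNReal.ofReal (((volume (A p)).toReal)⁻¹ * (c' p * c' p)) * volume (A p) := by
            apply mul_le_mul_right
            exact (Measure.restrict_apply_le _ _).trans (Measure.restrict_apply_le _ _)
        _ = ENNReal.ofReal (c' p ^ 2) := by
            nth_rewrite 2 [(ENNReal.ofReal_toReal (hAfin p)).symm]
            rw [← ENNReal.ofReal_mul (hk p)]
            congr 1
            rw [mul_comm, ← mul_assoc, mul_inv_cancel₀ (hAtR p).ne', one_mul]
            exact (pow_two _).symm
    have hne : (∑' p : Bidx, ∫⁻ t, ‖Set.indicator (A p)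
            (fun _ => ((volume (A p)).toReal)⁻¹ * (c' p * c' p)) t‖₊
          ∂((volume.restrict (Set.Icc 0 1)).restrict (dyadicInterval τ))) ≠ ⊤ := by
      apply ne_top_of_le_ne_top _ (ENNReal.tsum_le_tsum hlint)
      rw [← ENNReal.ofReal_tsum_of_nonneg (fun p => sq_nonneg _) hsum]
      exact ENNReal.ofReal_ne_top
    simp only [hpt]
    rw [MeasureTheory.integral_tsum hmeas hne]
    apply tsum_congr
    intro p
    rw [setint (hAm p) hIτm hIτsub]
    by_cases hp : τ <+: p.1
    · rw [hAsubI p hp]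
      rw [← mul_assoc, mul_inv_cancel₀ (hAtR p).ne', one_mul]
      exact (pow_two _).symm
    · have : c' p = 0 := if_neg hp
      rw [this]; ring
  have hgoal2 : ‖vres‖ = Real.sqrt (∑' p : Bidx, if τ <+: p.1 then c p ^ 2 else 0) := by
    have ht : (∑' p : Bidx, if τ <+: p.1 then c p ^ 2 else 0) = ∑' p, c' p ^ 2 := by
      apply tsum_congr
      intro p
      by_cases hp : τ <+: p.1 <;> simp [hc', hp]
    rw [ht, ← hD, Real.sqrt_sq (norm_nonneg _)]
  refine ⟨?_, hgoal2⟩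
  have h1 : ‖vres‖ ^ 2 ≤ ‖v‖ ^ 2 := by
    rw [hD]
    calc (∑' p, c' p ^ 2) ≤ ∑' p, ‖⟪e p, v⟫‖ ^ 2 := by
          apply Summable.tsum_le_tsum _ hsum (he.inner_products_summable (x := v))
          intro p
          by_cases hp : τ <+: p.1
          · have h2 : c' p = c p := if_pos hp
            rw [h2, ← hcoef_v p hp, Real.norm_eq_abs, sq_abs]
          · have h2 : c' p = 0 := if_neg hp
            rw [h2, zero_pow (two_ne_zero)]
            positivity
      _ ≤ ‖v‖ ^ 2 := he.tsum_inner_products_le v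
  calc ‖vres‖ = Real.sqrt (‖vres‖ ^ 2) := (Real.sqrt_sq (norm_nonneg _)).symm
    _ ≤ Real.sqrt (‖v‖ ^ 2) := Real.sqrt_le_sqrt h1
    _ = ‖v‖ := Real.sqrt_sq (norm_nonneg _)
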